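/- Let H ⊆ Z_2^m be an extended 1-perfect (m, 2^m/(2m), 4) code all of whose codewords have even weight and which does not contain the all-zero word. Then (1/|H|)·W_H(X+Y, X−Y) = X^m + Y^m − 2(XY)^{m/2}. -/

import Mathlib

namespace Stmt11

open Finset

noncomputable def sgn (a : ZMod 2) : ℝ := if a = 1 then -1 else 1

lemma zcases (a : ZMod 2) : a = 0 ∨ a = 1 := by revert a; decide

@[simp] lemma sgn_zero : sgn 0 = 1 := by norm_num [sgn]

@[simp] lemma sgn_one : sgn 1 = -1 := by norm_num [sgn]

lemma sgn_add (a b : ZMod 2) : sgn (a + b) = sgn a * sgn b := by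
  rcases zcases a with rfl | rfl <;> rcases zcases b with rfl | rfl <;>
    norm_num [sgn] <;> decide

lemma sgn_sum {ι : Type*} (s : Finset ι) (f : ι → ZMod 2) :
    sgn (∑ i ∈ s, f i) = ∏ i ∈ s, sgn (f i) := by
  induction s using Finset.cons_induction with
  | empty => simp
  | cons a s ha ih => rw [Finset.sum_cons, Finset.prod_cons, sgn_add, ih]

variable {n : ℕ}

noncomputable def chi (v x : Fin n → ZMod 2) : ℝ := ∏ i, sgn (v i * x i)

lemma chi_comm (v x : Fin n → ZMod 2) : chi v x = chi x v := by
  simp [chi, mul_comm]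

lemma chi_add_right (v x y : Fin n → ZMod 2) :
    chi v (x + y) = chi v x * chi v y := by
  rw [chi, chi, chi, ← Finset.prod_mul_distrib]
  exact Finset.prod_congr rfl fun i _ => by rw [Pi.add_apply, mul_add, sgn_add]

lemma univ_zmod2 : (univ : Finset (ZMod 2)) = {0, 1} := by decide

lemma sum_sgn_mul (a : ZMod 2) :
    ∑ b : ZMod 2, sgn (a * b) = if a = 0 then 2 else 0 := by
  rw [univ_zmod2, Finset.sum_pair (by decide : (0 : ZMod 2) ≠ 1)]
  rcases zcases a with rfl | rfl <;> norm_num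

lemma sum_chi (v : Fin n → ZMod 2) :
    ∑ x : Fin n → ZMod 2, chi v x = if v = 0 then 2 ^ n else 0 := by
  have h1 : ∑ x : Fin n → ZMod 2, chi v x
      = ∑ x ∈ Fintype.piFinset (fun _ : Fin n => (univ : Finset (ZMod 2))),
          ∏ i, sgn (v i * x i) := by
    rw [Fintype.piFinset_univ]; rfl
  rw [h1, ← Finset.prod_univ_sum (fun _ : Fin n => (univ : Finset (ZMod 2)))
    (fun i b => sgn (v i * b))]
  by_cases hv : v = 0
  · subst hv
    simp [sum_sgn_mul]
  · rw [if_neg hv]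
    obtain ⟨i, hi⟩ := Function.ne_iff.mp hv
    refine Finset.prod_eq_zero (Finset.mem_univ i) ?_
    rw [sum_sgn_mul, if_neg (by simpa using hi)]

lemma weight_prod (w : Fin n → ZMod 2) (A B : ℝ) :
    ∏ i, (if w i = 0 then A else B)
      = A ^ (n - hammingNorm w) * B ^ (hammingNorm w) := by
  rw [Finset.prod_ite (fun _ => A) (fun _ => B), Finset.prod_const, Finset.prod_const]
  have hsum : #(filter (fun i => w i = 0) univ) + hammingNorm w = n := by
    have h := Finset.card_filter_add_card_filter_not
      (s := (univ : Finset (Fin n))) (p := fun i => w i = 0)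
    simpa [hammingNorm, Finset.card_univ] using h
  have h2 : #(filter (fun i => ¬ w i = 0) univ) = hammingNorm w := by
    simp [hammingNorm]
  have h3 : #(filter (fun i => w i = 0) univ) = n - hammingNorm w := by omega
  rw [h2, h3]

lemma expand (c : Fin n → ZMod 2) (X Y : ℝ) :
    ∑ v : Fin n → ZMod 2,
        X ^ (n - hammingNorm v) * Y ^ (hammingNorm v) * chi v c
      = (X + Y) ^ (n - hammingNorm c) * (X - Y) ^ (hammingNorm c) := by
  have h1 : ∀ v : Fin n → ZMod 2,
      X ^ (n - hammingNorm v) * Y ^ (hammingNorm v) * chi v c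
        = ∏ i, ((if v i = 0 then X else Y) * sgn (v i * c i)) := by
    intro v
    rw [Finset.prod_mul_distrib, weight_prod]
    rfl
  rw [Finset.sum_congr rfl fun v _ => h1 v]
  have h2 : ∑ v : Fin n → ZMod 2, ∏ i, ((if v i = 0 then X else Y) * sgn (v i * c i))
      = ∏ i, ∑ b : ZMod 2, ((if b = 0 then X else Y) * sgn (b * c i)) := by
    rw [Finset.prod_univ_sum, Fintype.piFinset_univ]
  rw [h2]
  have h3 : ∀ i, ∑ b : ZMod 2, ((if b = 0 then X else Y) * sgn (b * c i))
      = if c i = 0 then X + Y else X - Y := by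
    intro i
    rw [univ_zmod2, Finset.sum_pair (by decide : (0 : ZMod 2) ≠ 1)]
    rcases zcases (c i) with h | h <;> simp [h] <;> ring
  rw [Finset.prod_congr rfl fun i _ => h3 i, weight_prod]

lemma sum_eq_norm (x : Fin n → ZMod 2) :
    ∑ i, x i = (hammingNorm x : ZMod 2) := by
  have h : ∀ i, x i = if x i ≠ 0 then (1 : ZMod 2) else 0 := by
    intro i; rcases zcases (x i) with h | h <;> simp [h]
  rw [Finset.sum_congr rfl fun i _ => h i, Finset.sum_boole]
  rfl

lemma chi_single (v : Fin n → ZMod 2) (i : Fin n) :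
    chi v (Pi.single i 1) = sgn (v i) := by
  rw [chi]
  have h0 : ∀ b ∈ (univ : Finset (Fin n)), b ≠ i →
      sgn (v b * (Pi.single i (1 : ZMod 2) : Fin n → ZMod 2) b) = 1 := by
    intro b _ hb
    rw [Pi.single_eq_of_ne hb, mul_zero, sgn_zero]
  rw [Finset.prod_eq_single i h0 (fun h => absurd (Finset.mem_univ i) h),
    Pi.single_eq_same, mul_one]

lemma sum_sgn_apply (v : Fin n → ZMod 2) :
    ∑ i, sgn (v i) = (n : ℝ) - 2 * (hammingNorm v : ℝ) := by
  have h : ∀ i, sgn (v i) = 1 - 2 * (if v i ≠ 0 then (1 : ℝ) else 0) := by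
    intro i; rcases zcases (v i) with h | h <;> norm_num [h, sgn]
  rw [Finset.sum_congr rfl fun i _ => h i, Finset.sum_sub_distrib,
    Finset.sum_const, ← Finset.mul_sum, Finset.sum_boole]
  simp [hammingNorm]

lemma norm_single_le (i : Fin n) :
    hammingNorm (Pi.single i 1 : Fin n → ZMod 2) ≤ 1 := by
  have h : Finset.filter
      (fun j => (Pi.single i 1 : Fin n → ZMod 2) j ≠ 0) Finset.univ ⊆ {i} := by
    intro j hj
    simp only [Finset.mem_filter] at hj
    rcases eq_or_ne j i with rfl | hne
    · exact Finset.mem_singleton_self j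
    · exact absurd (Pi.single_eq_of_ne hne 1) hj.2
  calc hammingNorm (Pi.single i 1 : Fin n → ZMod 2) ≤ ({i} : Finset (Fin n)).card :=
        Finset.card_le_card h
    _ = 1 := Finset.card_singleton i

end Stmt11

open Finset Stmt11

/-- MacWilliams transform of an extended 1-perfect `(m, 2^m/(2m), 4)` code all of
whose codewords have even weight and which does not contain the all-zero word:
with `m = 2^μ`, `(1/|H|)·W_H(X+Y, X−Y) = X^m + Y^m − 2(XY)^{m/2}`. -/
theorem stmt_11 (μ : ℕ) (hμ : 2 ≤ μ)
    (H : Finset (Fin (2 ^ μ) → ZMod 2))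
    (hcard : H.card = 2 ^ (2 ^ μ) / (2 * 2 ^ μ))
    (hdist : ∀ u ∈ H, ∀ v ∈ H, u ≠ v → 4 ≤ hammingDist u v)
    (heven : ∀ c ∈ H, Even (hammingNorm c))
    (hzero : (0 : Fin (2 ^ μ) → ZMod 2) ∉ H) :
    ∀ X Y : ℝ,
      (H.card : ℝ)⁻¹ *
          ∑ c ∈ H, (X + Y) ^ (2 ^ μ - hammingNorm c) * (X - Y) ^ (hammingNorm c)
        = X ^ (2 ^ μ) + Y ^ (2 ^ μ) - 2 * (X * Y) ^ (2 ^ (μ - 1)) := by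
  intro X Y
  -- arithmetic facts
  have hμ1 : μ + 1 ≤ 2 ^ μ := Nat.lt_two_pow_self
  have hhalf : 2 ^ (μ - 1) + 2 ^ (μ - 1) = 2 ^ μ := by
    have h : μ - 1 + 1 = μ := by omega
    calc 2 ^ (μ - 1) + 2 ^ (μ - 1) = 2 ^ (μ - 1 + 1) := by ring
    _ = 2 ^ μ := by rw [h]
  have hhpos : 0 < 2 ^ (μ - 1) := by positivity
  have hpos2 : 0 < 2 ^ μ := by positivity
  have i0 : Fin (2 ^ μ) := ⟨0, hpos2⟩
  have hcard' : H.card = 2 ^ (2 ^ μ - (μ + 1)) := by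
    rw [hcard, show 2 * 2 ^ μ = 2 ^ (μ + 1) by ring, Nat.pow_div hμ1 (by norm_num)]
  have hHpos : (0 : ℝ) < (H.card : ℝ) := by
    rw [hcard']; positivity
  -- the all-ones word
  set ones : Fin (2 ^ μ) → ZMod 2 := fun _ => 1 with hones
  have hnorm_ones : hammingNorm ones = 2 ^ μ := by
    simp [hammingNorm, hones, Finset.card_univ]
  have hzero_ne_ones : (0 : Fin (2 ^ μ) → ZMod 2) ≠ ones := by
    intro h
    have := congrFun h i0
    simp [hones] at this
  -- the odd-parity words
  set odds : Finset (Fin (2 ^ μ) → ZMod 2) :=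
    Finset.filter (fun x => ∑ i, x i = 1) Finset.univ with hodds
  have hcast_even : ∀ c ∈ H, ((hammingNorm c : ZMod 2)) = 0 := by
    intro c hc
    obtain ⟨k, hk⟩ := heven c hc
    rw [hk]
    push_cast
    rw [← two_mul, show (2 : ZMod 2) = 0 from rfl, zero_mul]
  have hparity : ∀ c ∈ H, ∀ i : Fin (2 ^ μ),
      c + Pi.single i 1 ∈ odds := by
    intro c hc i
    simp only [hodds, Finset.mem_filter, Finset.mem_univ, true_and]
    have h1 : ∑ j, (c + (Pi.single i 1 : Fin (2 ^ μ) → ZMod 2)) j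
        = (∑ j, c j) + ∑ j, (Pi.single i 1 : Fin (2 ^ μ) → ZMod 2) j := by
      simp [Finset.sum_add_distrib]
    rw [h1, sum_eq_norm, hcast_even c hc, Fintype.sum_pi_single', zero_add]
  have hinj : ∀ p ∈ H ×ˢ (Finset.univ : Finset (Fin (2 ^ μ))),
      ∀ q ∈ H ×ˢ (Finset.univ : Finset (Fin (2 ^ μ))),
      p.1 + Pi.single p.2 1 = q.1 + Pi.single q.2 1 → p = q := by
    rintro ⟨c, i⟩ hp ⟨d, j⟩ hq h
    have hc : c ∈ H := (Finset.mem_product.mp hp).1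
    have hd : d ∈ H := (Finset.mem_product.mp hq).1
    have hcd : c = d := by
      by_contra hne
      have h4 := hdist c hc d hd hne
      have hsub : c - d = (Pi.single j 1 : Fin (2 ^ μ) → ZMod 2) - Pi.single i 1 := by
        calc c - d = (c + Pi.single i 1) - (d + Pi.single i 1) := by abel
        _ = (d + Pi.single j 1) - (d + Pi.single i 1) := by rw [h]
        _ = (Pi.single j 1 : Fin (2 ^ μ) → ZMod 2) - Pi.single i 1 := by abel
      have hle : hammingDist c d ≤ 2 := by
        rw [hammingDist_comm, hammingDist_eq_hammingNorm, neg_add_eq_sub, hsub]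
        calc hammingNorm ((Pi.single j 1 : Fin (2 ^ μ) → ZMod 2) - Pi.single i 1)
            = hammingDist (Pi.single j 1 : Fin (2 ^ μ) → ZMod 2) (Pi.single i 1) :=
              by rw [hammingDist_comm, hammingDist_eq_hammingNorm, neg_add_eq_sub]
        _ ≤ hammingDist (Pi.single j 1 : Fin (2 ^ μ) → ZMod 2) 0
              + hammingDist (0 : Fin (2 ^ μ) → ZMod 2) (Pi.single i 1) :=
              hammingDist_triangle _ _ _
        _ = hammingNorm (Pi.single j 1 : Fin (2 ^ μ) → ZMod 2)
              + hammingNorm (Pi.single i 1 : Fin (2 ^ μ) → ZMod 2) := by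
              rw [hammingDist_zero_right, hammingDist_zero_left]
        _ ≤ 1 + 1 := Nat.add_le_add (norm_single_le j) (norm_single_le i)
        _ = 2 := rfl
      omega
    subst hcd
    have hsingle : (Pi.single i 1 : Fin (2 ^ μ) → ZMod 2) = Pi.single j 1 :=
      add_left_cancel h
    have hij : i = j := by
      by_contra hne
      have := congrFun hsingle i
      rw [Pi.single_eq_same, Pi.single_eq_of_ne hne] at this
      exact one_ne_zero this
    rw [hij]
  have hcard_odds : odds.card = 2 ^ (2 ^ μ - 1) := by
    have hsplit : odds.card
        + (Finset.filter (fun x : Fin (2 ^ μ) → ZMod 2 => ¬ (∑ i, x i = 1)) Finset.univ).card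
        = 2 ^ (2 ^ μ) := by
      rw [hodds, Finset.card_filter_add_card_filter_not, Finset.card_univ]
      simp [Fintype.card_fun]
    have hpow : 2 ^ (2 ^ μ) = 2 ^ (2 ^ μ - 1) + 2 ^ (2 ^ μ - 1) := by
      have h : 2 ^ μ - 1 + 1 = 2 ^ μ := Nat.sub_add_cancel hpos2
      calc 2 ^ (2 ^ μ) = 2 ^ (2 ^ μ - 1 + 1) := by rw [h]
      _ = 2 ^ (2 ^ μ - 1) + 2 ^ (2 ^ μ - 1) := by ring
    have hbij : odds.card
        = (Finset.filter (fun x : Fin (2 ^ μ) → ZMod 2 => ¬ (∑ i, x i = 1)) Finset.univ).card := by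
      have he0 : ∀ x : Fin (2 ^ μ) → ZMod 2,
          (x + Pi.single i0 1) + Pi.single i0 1 = x := by
        intro x
        funext j
        have h2 : ∀ a : ZMod 2, a + a = 0 := by decide
        simp [add_assoc, h2]
      have hsum1 : ∀ x : Fin (2 ^ μ) → ZMod 2,
          ∑ j, (x + (Pi.single i0 1 : Fin (2 ^ μ) → ZMod 2)) j
            = (∑ j, x j) + 1 := by
        intro x
        calc ∑ j, (x + (Pi.single i0 1 : Fin (2 ^ μ) → ZMod 2)) j
            = (∑ j, x j) + ∑ j, (Pi.single (i0 : Fin (2 ^ μ)) 1 :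
              Fin (2 ^ μ) → ZMod 2) j := by simp [Finset.sum_add_distrib]
        _ = (∑ j, x j) + 1 := by rw [Fintype.sum_pi_single']
      refine Finset.card_bij' (fun x _ => x + Pi.single i0 1)
        (fun x _ => x + Pi.single i0 1) ?_ ?_ ?_ ?_
      · intro a ha
        simp only [hodds, Finset.mem_filter, Finset.mem_univ, true_and] at ha ⊢
        rw [hsum1, ha]
        decide
      · intro a ha
        simp only [hodds, Finset.mem_filter, Finset.mem_univ, true_and] at ha ⊢
        rw [hsum1]
        rcases zcases (∑ j, a j) with h | h
        · rw [h]; decide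
        · exact absurd h ha
      · intro a _; exact he0 a
      · intro a _; exact he0 a
    rw [← hbij] at hsplit
    clear hbij
    omega
  have hcard_prod : (H ×ˢ (Finset.univ : Finset (Fin (2 ^ μ)))).card
      = 2 ^ (2 ^ μ - 1) := by
    rw [Finset.card_product, hcard', Finset.card_univ, Fintype.card_fin, ← pow_add]
    congr 1
    omega
  have himg : (H ×ˢ (Finset.univ : Finset (Fin (2 ^ μ)))).image
      (fun p => p.1 + Pi.single p.2 1) = odds := by
    apply Finset.eq_of_subset_of_card_le
    · intro x hx
      simp only [Finset.mem_image] at hx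
      obtain ⟨⟨c, i⟩, hp, rfl⟩ := hx
      exact hparity c (Finset.mem_product.mp hp).1 i
    · rw [Finset.card_image_of_injOn fun p hp q hq h =>
        hinj p (Finset.mem_coe.mp hp) q (Finset.mem_coe.mp hq) h,
        hcard_prod, hcard_odds]
  have hodds_sum : ∀ g : (Fin (2 ^ μ) → ZMod 2) → ℝ,
      ∑ x ∈ odds, g x = ∑ c ∈ H, ∑ i, g (c + Pi.single i 1) := by
    intro g
    rw [← himg, Finset.sum_image hinj, Finset.sum_product]
  -- the vanishing lemma
  have hvanish : ∀ v : Fin (2 ^ μ) → ZMod 2, v ≠ 0 → v ≠ ones →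
      hammingNorm v ≠ 2 ^ (μ - 1) → (∑ c ∈ H, chi v c) = 0 := by
    intro v hv0 hv1 hvw
    have hA : ∑ x ∈ odds, chi v x
        = (∑ c ∈ H, chi v c) * (((2 ^ μ : ℕ) : ℝ) - 2 * (hammingNorm v : ℝ)) := by
      rw [hodds_sum]
      have hterm : ∀ c ∈ H, ∑ i, chi v (c + Pi.single i 1)
          = chi v c * (((2 ^ μ : ℕ) : ℝ) - 2 * (hammingNorm v : ℝ)) := by
        intro c _
        calc ∑ i, chi v (c + Pi.single i 1) = ∑ i, chi v c * sgn (v i) :=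
              Finset.sum_congr rfl fun i _ => by rw [chi_add_right, chi_single]
        _ = chi v c * ∑ i, sgn (v i) := by rw [Finset.mul_sum]
        _ = _ := by rw [sum_sgn_apply]
      rw [Finset.sum_congr rfl hterm, ← Finset.sum_mul]
    have hB : ∑ x ∈ odds, chi v x = 0 := by
      have hS1 : ∑ x : Fin (2 ^ μ) → ZMod 2, chi v x = 0 := by
        rw [sum_chi, if_neg hv0]
      have hvo : v + ones ≠ 0 := by
        intro h
        apply hv1
        funext j
        have hj := congrFun h j
        simp only [Pi.add_apply, Pi.zero_apply, hones] at hj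
        rcases zcases (v j) with hv | hv
        · rw [hv, zero_add] at hj; exact absurd hj one_ne_zero
        · rw [hones]; exact hv
      have hS2 : ∑ x : Fin (2 ^ μ) → ZMod 2, chi (v + ones) x = 0 := by
        rw [sum_chi, if_neg hvo]
      have hchi1 : ∀ x : Fin (2 ^ μ) → ZMod 2,
          chi (v + ones) x = chi v x * sgn (∑ i, x i) := by
        intro x
        calc chi (v + ones) x = ∏ i, (sgn (v i * x i) * sgn (x i)) := by
              rw [chi]
              refine Finset.prod_congr rfl fun i _ => ?_
              have h : (v + ones) i * x i = v i * x i + x i := by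
                simp only [Pi.add_apply, hones]; ring
              rw [h, sgn_add]
        _ = chi v x * ∏ i, sgn (x i) := by rw [Finset.prod_mul_distrib]; rfl
        _ = chi v x * sgn (∑ i, x i) := by rw [sgn_sum]
      have hsplit1 : ∑ x : Fin (2 ^ μ) → ZMod 2, chi v x
          = (∑ x ∈ odds, chi v x)
            + ∑ x ∈ Finset.filter (fun x : Fin (2 ^ μ) → ZMod 2 => ¬ (∑ i, x i = 1)) Finset.univ, chi v x := by
        rw [hodds]
        exact (Finset.sum_filter_add_sum_filter_not Finset.univ _ _).symm
      have hsplit2 : ∑ x : Fin (2 ^ μ) → ZMod 2, chi (v + ones) x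
          = (∑ x ∈ Finset.filter (fun x : Fin (2 ^ μ) → ZMod 2 => ¬ (∑ i, x i = 1)) Finset.univ, chi v x)
            - ∑ x ∈ odds, chi v x := by
        rw [← Finset.sum_filter_add_sum_filter_not Finset.univ
          (fun x => ∑ i, x i = 1) (fun x => chi (v + ones) x)]
        have ho : ∑ x ∈ Finset.filter (fun x => ∑ i, x i = 1) Finset.univ,
            chi (v + ones) x = - ∑ x ∈ odds, chi v x := by
          rw [hodds, ← Finset.sum_neg_distrib]
          refine Finset.sum_congr rfl fun x hx => ?_
          have hx1 : ∑ i, x i = 1 := (Finset.mem_filter.mp hx).2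
          rw [hchi1, hx1, sgn_one, mul_neg_one]
        have he : ∑ x ∈ Finset.filter (fun x : Fin (2 ^ μ) → ZMod 2 => ¬ (∑ i, x i = 1)) Finset.univ,
            chi (v + ones) x
            = ∑ x ∈ Finset.filter (fun x : Fin (2 ^ μ) → ZMod 2 => ¬ (∑ i, x i = 1)) Finset.univ,
              chi v x := by
          refine Finset.sum_congr rfl fun x hx => ?_
          have hx1 : ¬ (∑ i, x i = 1) := (Finset.mem_filter.mp hx).2
          have hx0 : ∑ i, x i = 0 := (zcases _).resolve_right hx1
          rw [hchi1, hx0, sgn_zero, mul_one]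
        rw [ho, he]
        ring
      rw [hS1] at hsplit1
      rw [hS2] at hsplit2
      linarith
    have hne : ((2 ^ μ : ℕ) : ℝ) - 2 * (hammingNorm v : ℝ) ≠ 0 := by
      intro h
      have h' : ((2 ^ μ : ℕ) : ℝ) = 2 * (hammingNorm v : ℝ) := by linarith
      have h'' : (2 ^ μ : ℕ) = 2 * hammingNorm v := by exact_mod_cast h'
      exact hvw (by omega)
    have := hA.symm.trans hB
    exact (mul_eq_zero.mp this).resolve_right hne
  -- values at 0 and ones
  have hf0 : ∑ c ∈ H, chi 0 c = (H.card : ℝ) := by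
    have : ∀ c ∈ H, chi (0 : Fin (2 ^ μ) → ZMod 2) c = 1 := by
      intro c _
      rw [chi]
      simp
    rw [Finset.sum_congr rfl this, Finset.sum_const, nsmul_eq_mul, mul_one]
  have hfones : ∑ c ∈ H, chi ones c = (H.card : ℝ) := by
    have : ∀ c ∈ H, chi ones c = 1 := by
      intro c hc
      calc chi ones c = ∏ i, sgn (c i) := by
            rw [chi]; exact Finset.prod_congr rfl fun i _ => by
              simp only [hones, one_mul]
      _ = sgn (∑ i, c i) := (sgn_sum _ _).symm
      _ = 1 := by rw [sum_eq_norm, hcast_even c hc, sgn_zero]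
    rw [Finset.sum_congr rfl this, Finset.sum_const, nsmul_eq_mul, mul_one]
  -- total sum is zero
  have htot : ∑ v : Fin (2 ^ μ) → ZMod 2, (∑ c ∈ H, chi v c) = 0 := by
    rw [Finset.sum_comm]
    refine Finset.sum_eq_zero fun c hc => ?_
    rw [Finset.sum_congr rfl fun v _ => chi_comm v c, sum_chi,
      if_neg (ne_of_mem_of_not_mem hc hzero)]
  -- middle weight class
  have hnorm_zero : hammingNorm (0 : Fin (2 ^ μ) → ZMod 2) = 0 := hammingNorm_zero
  have h0_not : ¬ hammingNorm (0 : Fin (2 ^ μ) → ZMod 2) = 2 ^ (μ - 1) := by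
    rw [hnorm_zero]; omega
  have hones_not : ¬ hammingNorm ones = 2 ^ (μ - 1) := by
    rw [hnorm_ones]; omega
  have hmid : ∑ v ∈ Finset.filter
      (fun v => hammingNorm v = 2 ^ (μ - 1)) Finset.univ,
      (∑ c ∈ H, chi v c) = -2 * (H.card : ℝ) := by
    have hsplit := Finset.sum_filter_add_sum_filter_not
      (Finset.univ : Finset (Fin (2 ^ μ) → ZMod 2))
      (fun v => hammingNorm v = 2 ^ (μ - 1)) (fun v => ∑ c ∈ H, chi v c)
    have hnot : ∑ v ∈ Finset.filter
        (fun v => ¬ hammingNorm v = 2 ^ (μ - 1)) Finset.univ,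
        (∑ c ∈ H, chi v c) = 2 * (H.card : ℝ) := by
      have hterm : ∀ v ∈ Finset.filter
          (fun v => ¬ hammingNorm v = 2 ^ (μ - 1)) Finset.univ,
          (∑ c ∈ H, chi v c)
            = (if v = 0 then (H.card : ℝ) else 0)
              + (if v = ones then (H.card : ℝ) else 0) := by
        intro v hv
        have hvw : ¬ hammingNorm v = 2 ^ (μ - 1) := (Finset.mem_filter.mp hv).2
        by_cases h0 : v = 0
        · subst h0
          rw [hf0, if_pos rfl, if_neg hzero_ne_ones, add_zero]
        · by_cases h1 : v = ones
          · subst h1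
            rw [hfones, if_pos rfl, if_neg (Ne.symm hzero_ne_ones), zero_add]
          · rw [hvanish v h0 h1 hvw, if_neg h0, if_neg h1, add_zero]
      have hm0 : (0 : Fin (2 ^ μ) → ZMod 2)
          ∈ Finset.filter (fun v => ¬ hammingNorm v = 2 ^ (μ - 1)) Finset.univ :=
        Finset.mem_filter.mpr ⟨Finset.mem_univ _, h0_not⟩
      have hm1 : ones
          ∈ Finset.filter (fun v => ¬ hammingNorm v = 2 ^ (μ - 1)) Finset.univ :=
        Finset.mem_filter.mpr ⟨Finset.mem_univ _, hones_not⟩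
      rw [Finset.sum_congr rfl hterm, Finset.sum_add_distrib,
        Finset.sum_ite_eq' _ (0 : Fin (2 ^ μ) → ZMod 2) (fun _ => (H.card : ℝ)),
        Finset.sum_ite_eq' _ ones (fun _ => (H.card : ℝ)), if_pos hm0, if_pos hm1]
      ring
    rw [hnot] at hsplit
    rw [htot] at hsplit
    linarith
  -- main computation
  have hexpand : ∑ c ∈ H, (X + Y) ^ (2 ^ μ - hammingNorm c)
        * (X - Y) ^ (hammingNorm c)
      = ∑ v : Fin (2 ^ μ) → ZMod 2,
          X ^ (2 ^ μ - hammingNorm v) * Y ^ (hammingNorm v) * (∑ c ∈ H, chi v c) := by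
    rw [Finset.sum_congr rfl fun c _ => (expand c X Y).symm, Finset.sum_comm]
    exact Finset.sum_congr rfl fun v _ => by rw [← Finset.mul_sum]
  rw [hexpand, ← Finset.sum_filter_add_sum_filter_not
    (Finset.univ : Finset (Fin (2 ^ μ) → ZMod 2))
    (fun v => hammingNorm v = 2 ^ (μ - 1))]
  have hmid' : ∑ v ∈ Finset.filter
      (fun v => hammingNorm v = 2 ^ (μ - 1)) Finset.univ,
      X ^ (2 ^ μ - hammingNorm v) * Y ^ (hammingNorm v) * (∑ c ∈ H, chi v c)
      = X ^ (2 ^ (μ - 1)) * Y ^ (2 ^ (μ - 1)) * (-2 * (H.card : ℝ)) := by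
    have hterm : ∀ v ∈ Finset.filter
        (fun v => hammingNorm v = 2 ^ (μ - 1)) Finset.univ,
        X ^ (2 ^ μ - hammingNorm v) * Y ^ (hammingNorm v) * (∑ c ∈ H, chi v c)
          = X ^ (2 ^ (μ - 1)) * Y ^ (2 ^ (μ - 1)) * (∑ c ∈ H, chi v c) := by
      intro v hv
      have hvw : hammingNorm v = 2 ^ (μ - 1) := (Finset.mem_filter.mp hv).2
      rw [hvw, show 2 ^ μ - 2 ^ (μ - 1) = 2 ^ (μ - 1) by omega]
    rw [Finset.sum_congr rfl hterm, ← Finset.mul_sum, hmid]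
  have hnot' : ∑ v ∈ Finset.filter
      (fun v => ¬ hammingNorm v = 2 ^ (μ - 1)) Finset.univ,
      X ^ (2 ^ μ - hammingNorm v) * Y ^ (hammingNorm v) * (∑ c ∈ H, chi v c)
      = X ^ (2 ^ μ) * (H.card : ℝ) + Y ^ (2 ^ μ) * (H.card : ℝ) := by
    have hterm : ∀ v ∈ Finset.filter
        (fun v => ¬ hammingNorm v = 2 ^ (μ - 1)) Finset.univ,
        X ^ (2 ^ μ - hammingNorm v) * Y ^ (hammingNorm v) * (∑ c ∈ H, chi v c)
          = (if v = 0 then X ^ (2 ^ μ) * (H.card : ℝ) else 0)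
            + (if v = ones then Y ^ (2 ^ μ) * (H.card : ℝ) else 0) := by
      intro v hv
      have hvw : ¬ hammingNorm v = 2 ^ (μ - 1) := (Finset.mem_filter.mp hv).2
      by_cases h0 : v = 0
      · subst h0
        rw [hf0, if_pos rfl, if_neg hzero_ne_ones, add_zero, hnorm_zero]
        simp
      · by_cases h1 : v = ones
        · subst h1
          rw [hfones, if_pos rfl, if_neg (Ne.symm hzero_ne_ones), zero_add,
            hnorm_ones, Nat.sub_self]
          ring
        · rw [hvanish v h0 h1 hvw, if_neg h0, if_neg h1, add_zero, mul_zero]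
    have hm0 : (0 : Fin (2 ^ μ) → ZMod 2)
        ∈ Finset.filter (fun v => ¬ hammingNorm v = 2 ^ (μ - 1)) Finset.univ :=
      Finset.mem_filter.mpr ⟨Finset.mem_univ _, h0_not⟩
    have hm1 : ones
        ∈ Finset.filter (fun v => ¬ hammingNorm v = 2 ^ (μ - 1)) Finset.univ :=
      Finset.mem_filter.mpr ⟨Finset.mem_univ _, hones_not⟩
    rw [Finset.sum_congr rfl hterm, Finset.sum_add_distrib,
      Finset.sum_ite_eq' _ (0 : Fin (2 ^ μ) → ZMod 2)
        (fun _ => X ^ (2 ^ μ) * (H.card : ℝ)),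
      Finset.sum_ite_eq' _ ones (fun _ => Y ^ (2 ^ μ) * (H.card : ℝ)),
      if_pos hm0, if_pos hm1]
  rw [hmid', hnot', mul_pow]
  field_simp
  ring
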